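/- Let ε > 0. Let Θ be the uniform probability measure on [−π, π) and let ρ be the probability measure on [0, ∞) with density r ↦ ε²·r·e^{−εr} with respect to Lebesgue measure. Then the pushforward of the product measure Θ ⊗ ρ under the polar-coordinates map (θ, r) ↦ (r·cos θ, r·sin θ) is the probability measure on ℝ² with density (x, y) ↦ (ε²/(2π))·e^{−ε·√(x² + y²)} with respect to two-dimensional Lebesgue measure, i.e. the bivariate Laplace distribution for the Euclidean metric with scale parameter ε. -/

import Mathlib

open MeasureTheory Real Set
open scoped ENNReal

lemma aux_prod_withDensity {μ ν : Measure ℝ} [SigmaFinite μ] [SigmaFinite ν]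
    {f g : ℝ → ℝ≥0∞} (hf : Measurable f) (hg : Measurable g)
    (hf' : ∀ x, f x ≠ ⊤) (hg' : ∀ x, g x ≠ ⊤) :
    (μ.withDensity f).prod (ν.withDensity g) =
      (μ.prod ν).withDensity (fun p => f p.1 * g p.2) := by
  have : SigmaFinite (ν.withDensity g) := SigmaFinite.withDensity_of_ne_top' hg'
  have : SigmaFinite (μ.withDensity f) := SigmaFinite.withDensity_of_ne_top' hf'
  refine Measure.prod_eq fun s t hs ht => ?_
  rw [withDensity_apply _ (hs.prod ht), ← Measure.prod_restrict,
    lintegral_prod_mul hf.aemeasurable hg.aemeasurable,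
    withDensity_apply _ hs, withDensity_apply _ ht]

lemma aux_hasFDerivAt (p : ℝ × ℝ) :
    HasFDerivAt (fun p : ℝ × ℝ => (p.2 * Real.cos p.1, p.2 * Real.sin p.1))
      (LinearMap.toContinuousLinearMap (Matrix.toLin (Module.Basis.finTwoProd ℝ) (Module.Basis.finTwoProd ℝ)
        !![-p.2 * sin p.1, cos p.1; p.2 * cos p.1, sin p.1])) p := by
  rw [Matrix.toLin_finTwoProd_toContinuousLinearMap]
  convert HasFDerivAt.prodMk (𝕜 := ℝ)
    (hasFDerivAt_snd.mul ((hasDerivAt_cos p.1).comp_hasFDerivAt p hasFDerivAt_fst))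
    (hasFDerivAt_snd.mul ((hasDerivAt_sin p.1).comp_hasFDerivAt p hasFDerivAt_fst)) using 2 <;>
  (try rfl) <;> simp [smul_smul, add_comm, neg_mul, smul_neg, neg_smul _ (ContinuousLinearMap.fst ℝ ℝ ℝ)]

/-- Drawing an angle `θ` uniformly in `[−π, π)` and, independently, a radius
`r` with density `ε²·r·e^{−εr}` on `[0, ∞)`, and mapping through polar coordinates
`(θ, r) ↦ (r·cos θ, r·sin θ)`, yields the bivariate (Euclidean) Laplace distribution on
`ℝ²`, with density `(x, y) ↦ (ε²/(2π))·e^{−ε√(x²+y²)}` w.r.t. Lebesgue measure. -/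
theorem polar_sampling_gives_bivariate_laplacian (ε : ℝ) (hε : 0 < ε) :
    Measure.map (fun p : ℝ × ℝ => (p.2 * Real.cos p.1, p.2 * Real.sin p.1))
      (((ENNReal.ofReal (2 * π))⁻¹ • volume.restrict (Set.Ico (-π) π)).prod
        ((volume.restrict (Set.Ici (0 : ℝ))).withDensity
          (fun r : ℝ => ENNReal.ofReal (ε ^ 2 * r * Real.exp (-ε * r))))) =
      volume.withDensity (fun q : ℝ × ℝ =>
        ENNReal.ofReal (ε ^ 2 / (2 * π) * Real.exp (-ε * Real.sqrt (q.1 ^ 2 + q.2 ^ 2)))) := by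
  set T : ℝ × ℝ → ℝ × ℝ := fun p => (p.2 * Real.cos p.1, p.2 * Real.sin p.1) with hT
  set B : ℝ × ℝ → ℝ × ℝ →L[ℝ] ℝ × ℝ := fun p =>
    LinearMap.toContinuousLinearMap (Matrix.toLin (Module.Basis.finTwoProd ℝ) (Module.Basis.finTwoProd ℝ)
      !![-p.2 * sin p.1, cos p.1; p.2 * cos p.1, sin p.1]) with hB
  have B_det : ∀ p : ℝ × ℝ, (B p).det = -p.2 := by
    intro p
    simp only [hB, LinearMap.det_toContinuousLinearMap, LinearMap.det_toLin,
      Matrix.det_fin_two_of]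
    linear_combination (-p.2) * sin_sq_add_cos_sq p.1
  have hTmeas : Measurable T := by fun_prop
  have hTpolar : T = polarCoord.symm ∘ Prod.swap := rfl
  set s : Set (ℝ × ℝ) := Ioo (-π) π ×ˢ Ioi (0 : ℝ) with hs_def
  have hs : MeasurableSet s := measurableSet_Ioo.prod measurableSet_Ioi
  have hswap : Prod.swap '' s = polarCoord.target := by
    rw [hs_def, Set.image_swap_prod, polarCoord_target]
  have hinj : InjOn T s := by
    rw [hTpolar]
    refine InjOn.comp (t := polarCoord.target) ?_ Prod.swap_injective.injOn ?_
    · rw [← polarCoord.symm_source]; exact polarCoord.symm.injOn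
    · rw [Set.mapsTo_iff_image_subset] ; rw [hswap, ← polarCoord.symm_source]
  have himg : T '' s = polarCoord.source := by
    rw [hTpolar, Set.image_comp, hswap, polarCoord.symm_image_target_eq_source]
  -- rewrite the LHS measure
  set ρd : ℝ → ℝ≥0∞ := fun r => ENNReal.ofReal (ε ^ 2 * r * Real.exp (-ε * r)) with hρd
  set c : ℝ≥0∞ := (ENNReal.ofReal (2 * π))⁻¹ with hc
  have hρd_meas : Measurable ρd := by fun_prop
  have hπ : (0:ℝ) < 2 * π := by positivity
  set h : ℝ × ℝ → ℝ≥0∞ := fun p => c * ρd p.2 with hh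
  have hmeas_h : Measurable h := by fun_prop
  set f : ℝ × ℝ → ℝ≥0∞ := fun q =>
    ENNReal.ofReal (ε ^ 2 / (2 * π) * Real.exp (-ε * Real.sqrt (q.1 ^ 2 + q.2 ^ 2))) with hf
  have hfmeas : Measurable f := by fun_prop
  have hμ : (((ENNReal.ofReal (2 * π))⁻¹ • volume.restrict (Set.Ico (-π) π)).prod
        ((volume.restrict (Set.Ici (0 : ℝ))).withDensity ρd)) =
      (volume.restrict s).withDensity h := by
    rw [← withDensity_const (μ := volume.restrict (Set.Ico (-π) π)) c,
      aux_prod_withDensity measurable_const hρd_meas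
        (fun _ => ENNReal.inv_ne_top.mpr (by simp [hπ, pi_pos])) (fun _ => ENNReal.ofReal_ne_top),
      Measure.prod_restrict, ← Measure.volume_eq_prod ℝ ℝ]
    congr 1
    refine Measure.restrict_congr_set ?_
    have hsub : s ⊆ Set.Ico (-π) π ×ˢ Set.Ici (0:ℝ) := by
      rintro ⟨a, b⟩ ⟨ha, hb⟩
      exact ⟨⟨ha.1.le, ha.2⟩, Set.mem_Ici.2 (le_of_lt (Set.mem_Ioi.1 hb))⟩
    have h1 : volume ((Set.Ico (-π) π ×ˢ Set.Ici (0:ℝ)) \ s) = 0 := by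
      have hsub2 : (Set.Ico (-π) π ×ˢ Set.Ici (0:ℝ)) \ s ⊆
          (({-π} : Set ℝ) ×ˢ (Set.univ : Set ℝ)) ∪ ((Set.univ : Set ℝ) ×ˢ ({0} : Set ℝ)) := by
        rintro ⟨a, b⟩ ⟨⟨⟨ha1, ha2⟩, hb1⟩, hns⟩
        by_cases hA : a = -π
        · exact Or.inl ⟨hA, trivial⟩
        · right
          refine ⟨trivial, ?_⟩
          by_contra hb0
          exact hns ⟨⟨lt_of_le_of_ne ha1 (Ne.symm hA), ha2⟩, lt_of_le_of_ne hb1 (Ne.symm hb0)⟩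
      refine measure_mono_null hsub2 (measure_union_null ?_ ?_)
      · rw [Measure.volume_eq_prod ℝ ℝ, Measure.prod_prod]; simp
      · rw [Measure.volume_eq_prod ℝ ℝ, Measure.prod_prod]; simp
    exact ae_eq_set.2 ⟨h1, by rw [Set.diff_eq_empty.2 hsub]; exact measure_empty⟩
  rw [hμ]
  refine Measure.ext fun A hA => ?_
  rw [Measure.map_apply hTmeas hA, withDensity_apply _ (hTmeas hA),
    Measure.restrict_restrict (hTmeas hA), withDensity_apply _ hA]
  have step1 : ∫⁻ q in A, f q ∂volume = ∫⁻ q in A ∩ T '' s, f q ∂volume := by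
    refine setLIntegral_congr ?_
    rw [himg]
    have hsrc := polarCoord_source_ae_eq_univ
    rw [Filter.eventuallyEq_set] at hsrc ⊢
    filter_upwards [hsrc] with q hq
    have hq' : q ∈ polarCoord.source := hq.mpr (Set.mem_univ q)
    exact ⟨fun ha => ⟨ha, hq'⟩, fun ha => ha.1⟩
  have step2 : A ∩ T '' s = T '' (T ⁻¹' A ∩ s) := (Set.image_preimage_inter T s A).symm
  have hmeas' : MeasurableSet (T ⁻¹' A ∩ s) := (hTmeas hA).inter hs
  have step3 : ∫⁻ q in T '' (T ⁻¹' A ∩ s), f q ∂volume =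
      ∫⁻ p in T ⁻¹' A ∩ s, ENNReal.ofReal |(B p).det| * f (T p) ∂volume := by
    exact lintegral_image_eq_lintegral_abs_det_fderiv_mul volume hmeas'
      (fun p _ => (aux_hasFDerivAt p).hasFDerivWithinAt)
      (hinj.mono Set.inter_subset_right) f
  have step4 : ∫⁻ p in T ⁻¹' A ∩ s, ENNReal.ofReal |(B p).det| * f (T p) ∂volume =
      ∫⁻ p in T ⁻¹' A ∩ s, h p ∂volume := by
    refine setLIntegral_congr_fun hmeas' (fun p hp => ?_)
    have hp2 : 0 < p.2 := hp.2.2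
    have hst : Real.sqrt ((p.2 * cos p.1) ^ 2 + (p.2 * sin p.1) ^ 2) = p.2 := by
      have : (p.2 * cos p.1) ^ 2 + (p.2 * sin p.1) ^ 2 = p.2 ^ 2 := by
        have := sin_sq_add_cos_sq p.1; nlinarith
      rw [this, Real.sqrt_sq hp2.le]
    rw [B_det, abs_neg, abs_of_pos hp2]
    show ENNReal.ofReal p.2 * f (T p) = c * ρd p.2
    rw [hf, hc, hρd]
    simp only [hT, hst]
    rw [← ENNReal.ofReal_inv_of_pos hπ, ← ENNReal.ofReal_mul hp2.le,
      ← ENNReal.ofReal_mul (by positivity)]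
    congr 1
    field_simp
  rw [step1, step2, step3, step4]
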